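/- There exists a coherent sequence of one-to-one functions on the countable infinite ordinals: for every ordinal α with ω ≤ α < ω₁ there is an injective function f_α : α → ℕ (i.e., f_α is defined on the set of ordinals below α) such that for all ω ≤ α < β < ω₁, f_β(γ) = f_α(γ) for all but finitely many γ < α. -/

import Mathlib

open Cardinal Set Ordinal

namespace CoherentSeqAux

/-- Dependent choice for sequences. -/
lemma dep_choice {X : Type*} {P : ℕ → X → Prop} {Q : ℕ → X → X → Prop}
    (h0 : ∃ x, P 0 x) (hs : ∀ n x, P n x → ∃ y, P (n+1) y ∧ Q n x y) :
    ∃ f : ℕ → X, (∀ n, P n (f n)) ∧ ∀ n, Q n (f n) (f (n+1)) := by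
  choose y hy hQ using hs
  obtain ⟨x0, hx0⟩ := h0
  let f : ∀ n : ℕ, {x : X // P n x} :=
    fun n => Nat.rec ⟨x0, hx0⟩ (fun n p => ⟨y n p.1 p.2, hy n p.1 p.2⟩) n
  exact ⟨fun n => (f n).1, fun n => (f n).2, fun n => hQ n (f n).1 (f n).2⟩

abbrev Good (α : Ordinal.{0}) (e : Ordinal.{0} → ℕ) : Prop :=
  Set.InjOn e {γ | γ < α} ∧ ((e '' {γ | γ < α})ᶜ).Infinite

abbrev Coh (β : Ordinal.{0}) (e e' : Ordinal.{0} → ℕ) : Prop :=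
  {γ | γ < β ∧ e γ ≠ e' γ}.Finite

lemma base_case : ∃ e : Ordinal.{0} → ℕ, Good Ordinal.omega0 e := by
  classical
  refine ⟨fun γ => if h : γ < Ordinal.omega0 then
    2 * Classical.choose (Ordinal.lt_omega0.mp h) else 0, ?_, ?_⟩
  · intro γ hγ δ hδ heq
    simp only [mem_setOf_eq] at hγ hδ
    dsimp only at heq
    rw [dif_pos hγ, dif_pos hδ] at heq
    have h1 := Classical.choose_spec (Ordinal.lt_omega0.mp hγ)
    have h2 := Classical.choose_spec (Ordinal.lt_omega0.mp hδ)
    rw [h1, h2]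
    norm_num at heq
    rw [heq]
  · refine Set.infinite_of_injective_forall_mem (f := fun k : ℕ => 2 * k + 1)
      (fun a b hab => by dsimp only at hab; omega) ?_
    intro k
    simp only [mem_compl_iff, mem_image, mem_setOf_eq, not_exists, not_and]
    intro γ hγ heq
    simp only [dif_pos hγ] at heq
    omega

lemma succ_case (β : Ordinal.{0}) (hβω : Ordinal.omega0 ≤ β)
    (g : Ordinal.{0} → Ordinal.{0} → ℕ) (hg : Good β (g β))
    (hcoh : ∀ β', Ordinal.omega0 ≤ β' → β' < β → Coh β' (g β) (g β')) :
    ∃ e, Good (Order.succ β) e ∧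
      ∀ β', Ordinal.omega0 ≤ β' → β' < Order.succ β → Coh β' e (g β') := by
  classical
  obtain ⟨hinj, hinf⟩ := hg
  obtain ⟨m, hm⟩ := hinf.nonempty
  refine ⟨fun γ => if γ = β then m else g β γ, ⟨?_, ?_⟩, ?_⟩
  · intro γ hγ δ hδ heq
    simp only [mem_setOf_eq, Order.lt_succ_iff] at hγ hδ
    dsimp only at heq
    by_cases h1 : γ = β <;> by_cases h2 : δ = β
    · rw [h1, h2]
    · rw [if_pos h1, if_neg h2] at heq
      exact absurd ⟨δ, lt_of_le_of_ne hδ h2, heq.symm⟩ hm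
    · rw [if_neg h1, if_pos h2] at heq
      exact absurd ⟨γ, lt_of_le_of_ne hγ h1, heq⟩ hm
    · rw [if_neg h1, if_neg h2] at heq
      exact hinj (lt_of_le_of_ne hγ h1) (lt_of_le_of_ne hδ h2) heq
  · have : ((fun γ => if γ = β then m else g β γ) '' {γ | γ < Order.succ β}) ⊆
        insert m (g β '' {γ | γ < β}) := by
      rintro x ⟨γ, hγ, rfl⟩
      dsimp only
      by_cases h1 : γ = β
      · rw [if_pos h1]; exact mem_insert _ _
      · rw [if_neg h1]
        exact mem_insert_of_mem _ ⟨γ, lt_of_le_of_ne (Order.lt_succ_iff.mp hγ) h1, rfl⟩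
    refine ((hinf.diff (finite_singleton m)).mono ?_)
    intro x hx
    simp only [mem_diff, mem_compl_iff, mem_singleton_iff] at hx
    intro hmem
    rcases this hmem with h | h
    · exact hx.2 h
    · exact hx.1 h
  · intro β' hβ'ω hβ'
    have hβ'β : β' ≤ β := Order.lt_succ_iff.mp hβ'
    rcases eq_or_lt_of_le hβ'β with rfl | hlt
    · refine Set.Finite.subset (Set.finite_empty) ?_
      rintro γ ⟨hγ, hne⟩
      dsimp only at hne
      exact hne (if_neg hγ.ne)
    · refine (hcoh β' hβ'ω hlt).subset ?_
      rintro γ ⟨hγ, hne⟩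
      refine ⟨hγ, ?_⟩
      dsimp only at hne
      rwa [if_neg (hγ.trans hlt).ne] at hne

lemma limit_case (α : Ordinal.{0}) (hlim : Order.IsSuccLimit α) (hω : Ordinal.omega0 < α)
    (hcnt : (Set.Iio α).Countable)
    (g : Ordinal.{0} → Ordinal.{0} → ℕ)
    (hg : ∀ β, Ordinal.omega0 ≤ β → β < α → Good β (g β))
    (hcoh : ∀ β β', Ordinal.omega0 ≤ β → β < β' → β' < α → Coh β (g β') (g β)) :
    ∃ e, Good α e ∧ ∀ β, Ordinal.omega0 ≤ β → β < α → Coh β e (g β) := by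
  classical
  obtain ⟨b, hb⟩ := (Set.countable_iff_exists_surjective ⟨Ordinal.omega0, Set.mem_Iio.mpr hω⟩).mp hcnt
  set a : ℕ → Ordinal.{0} :=
    fun n => Nat.rec Ordinal.omega0 (fun n an => max (an + 1) ((b n).1 + 1)) n with ha
  have ha0 : a 0 = Ordinal.omega0 := rfl
  have haS : ∀ n, a (n+1) = max (a n + 1) ((b n).1 + 1) := fun n => rfl
  have halt : ∀ n, a n < α := by
    intro n; induction n with
    | zero => exact hω
    | succ n ih =>
      rw [haS]
      exact max_lt (by rw [Ordinal.add_one_eq_succ]; exact hlim.succ_lt ih)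
        (by rw [Ordinal.add_one_eq_succ]; exact hlim.succ_lt (Set.mem_Iio.mp (b n).2))
  have haω : ∀ n, Ordinal.omega0 ≤ a n := by
    intro n; induction n with
    | zero => exact le_rfl
    | succ n ih =>
      rw [haS]
      refine le_trans (ih.trans ?_) (le_max_left _ _)
      rw [Ordinal.add_one_eq_succ]
      exact Order.le_succ _
  have hasucc : ∀ n, a n < a (n+1) := by
    intro n; rw [haS]
    refine lt_of_lt_of_le ?_ (le_max_left _ _)
    rw [Ordinal.add_one_eq_succ]
    exact Order.lt_succ _
  have hmono : StrictMono a := strictMono_nat_of_lt_succ hasucc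
  have hacof : ∀ γ, γ < α → ∃ n, γ < a n := by
    intro γ hγ
    obtain ⟨n, hn⟩ := hb ⟨γ, Set.mem_Iio.mpr hγ⟩
    have hn' : (b n).1 = γ := congrArg Subtype.val hn
    refine ⟨n+1, ?_⟩
    rw [haS]
    refine lt_of_lt_of_le ?_ (le_max_right _ _)
    rw [hn', Ordinal.add_one_eq_succ]
    exact Order.lt_succ _
  have hstep : ∀ (n : ℕ) (p : (Ordinal.{0} → ℕ) × Finset ℕ),
      (Set.InjOn p.1 {γ | γ < a n} ∧ {γ | γ < a n ∧ p.1 γ ≠ g (a n) γ}.Finite ∧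
        (∀ γ, γ < a n → p.1 γ ∉ p.2) ∧ p.2.card = n) →
      ∃ q : (Ordinal.{0} → ℕ) × Finset ℕ,
        (Set.InjOn q.1 {γ | γ < a (n+1)} ∧
          {γ | γ < a (n+1) ∧ q.1 γ ≠ g (a (n+1)) γ}.Finite ∧
          (∀ γ, γ < a (n+1) → q.1 γ ∉ q.2) ∧ q.2.card = n+1) ∧
        ((∀ γ, γ < a n → q.1 γ = p.1 γ) ∧ p.2 ⊆ q.2) := by
    rintro n ⟨h, R⟩ ⟨hinj, hfin, hR, hcard⟩
    have hββ' := hasucc n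
    have hβ'α := halt (n+1)
    have hgood' := hg (a (n+1)) ((haω n).trans hββ'.le) hβ'α
    have hcohn := hcoh (a n) (a (n+1)) (haω n) hββ' hβ'α
    have hD : {γ | γ < a n ∧ h γ ≠ g (a (n+1)) γ}.Finite := by
      refine (hfin.union hcohn).subset ?_
      rintro γ ⟨hγ, hne⟩
      by_cases hc : h γ = g (a n) γ
      · exact Or.inr ⟨hγ, fun hh => hne (hc.trans hh.symm)⟩
      · exact Or.inl ⟨hγ, hc⟩
    set B : Set ℕ := h '' {γ | γ < a n} ∪ (g (a (n+1)) '' {γ | γ < a (n+1)} ∪ ↑R) with hBdef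
    have hBc : Bᶜ.Infinite := by
      have h1 : h '' {γ | γ < a n} ⊆
          g (a (n+1)) '' {γ | γ < a (n+1)} ∪ h '' {γ | γ < a n ∧ h γ ≠ g (a (n+1)) γ} := by
        rintro x ⟨γ, hγ, rfl⟩
        by_cases hc : h γ = g (a (n+1)) γ
        · exact Or.inl ⟨γ, hγ.trans hββ', hc.symm⟩
        · exact Or.inr ⟨γ, ⟨hγ, hc⟩, rfl⟩
      refine (hgood'.2.diff ((hD.image h).union R.finite_toSet)).mono ?_
      intro x hx
      simp only [mem_diff, mem_compl_iff, mem_union] at hx ⊢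
      rintro (hx1 | hx2 | hx3)
      · rcases h1 hx1 with h2 | h2
        · exact hx.1 h2
        · exact hx.2 (Or.inl h2)
      · exact hx.1 hx2
      · exact hx.2 (Or.inr hx3)
    set C : Set Ordinal.{0} := {γ | a n ≤ γ ∧ γ < a (n+1) ∧
      (g (a (n+1)) γ ∈ h '' {δ | δ < a n} ∨ g (a (n+1)) γ ∈ R)} with hCdef
    have hCsub : C ⊆ {γ | γ < a (n+1)} := fun γ hγ => hγ.2.1
    have hC : C.Finite := by
      refine Set.Finite.of_finite_image (f := g (a (n+1))) ?_ (hgood'.1.mono hCsub)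
      refine ((hD.image h).union R.finite_toSet).subset ?_
      rintro x ⟨γ, ⟨hγ1, hγ2, hmem | hmem⟩, rfl⟩
      · obtain ⟨δ, hδ, hδeq⟩ := hmem
        by_cases hc : h δ = g (a (n+1)) δ
        · exfalso
          have heqγδ : γ = δ := hgood'.1 hγ2 (hδ.trans hββ') (hδeq.symm.trans hc)
          exact absurd (heqγδ ▸ hγ1) hδ.not_ge
        · exact Or.inl ⟨δ, ⟨hδ, hc⟩, hδeq⟩
      · exact Or.inr hmem
    have : Countable ↥C := hC.countable.to_subtype
    obtain ⟨ι, hι⟩ := exists_injective_nat ↥C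
    set emb : ℕ ↪ ↥(Bᶜ) := Set.Infinite.natEmbedding _ hBc with hemb
    have hRB : (↑R : Set ℕ) ⊆ B := fun x hx => Or.inr (Or.inr hx)
    have hhB : ∀ γ, γ < a n → h γ ∈ B := fun γ hγ => Or.inl ⟨γ, hγ, rfl⟩
    have hgB : ∀ γ, γ < a (n+1) → g (a (n+1)) γ ∈ B := fun γ hγ => Or.inr (Or.inl ⟨γ, hγ, rfl⟩)
    have hfreshB : ∀ k, ((emb k : ↥(Bᶜ)) : ℕ) ∉ B := fun k => (emb k).2
    have hfreshne : ∀ k l, k ≠ l → ((emb k : ↥(Bᶜ)) : ℕ) ≠ ((emb l : ↥(Bᶜ)) : ℕ) :=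
      fun k l hkl heq => hkl (emb.injective (Subtype.ext heq))
    set e' : Ordinal.{0} → ℕ := fun γ => if γ < a n then h γ else
      if hγC : γ ∈ C then ((emb (ι ⟨γ, hγC⟩ + 1) : ↥(Bᶜ)) : ℕ) else g (a (n+1)) γ with he'
    have hv1 : ∀ γ, γ < a n → e' γ = h γ := by
      intro γ hγ; rw [he']; simp only [if_pos hγ]
    have hv2 : ∀ γ (hγC : γ ∈ C), e' γ = ((emb (ι ⟨γ, hγC⟩ + 1) : ↥(Bᶜ)) : ℕ) := by
      intro γ hγC; rw [he']; simp only [if_neg (not_lt.mpr hγC.1), dif_pos hγC]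
    have hv3 : ∀ γ, a n ≤ γ → γ ∉ C → e' γ = g (a (n+1)) γ := by
      intro γ hγ hγC; rw [he']; simp only [if_neg (not_lt.mpr hγ), dif_neg hγC]
    refine ⟨(e', insert ((emb 0 : ↥(Bᶜ)) : ℕ) R), ⟨?_, ?_, ?_, ?_⟩, hv1,
      Finset.subset_insert _ _⟩
    · -- injectivity
      show Set.InjOn e' {γ | γ < a (n+1)}
      intro γ hγ δ hδ heq
      simp only [mem_setOf_eq] at hγ hδ
      by_cases h1 : γ < a n <;> by_cases h2 : δ < a n
      · rw [hv1 γ h1, hv1 δ h2] at heq; exact hinj h1 h2 heq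
      · exfalso
        rw [hv1 γ h1] at heq
        by_cases hδC : δ ∈ C
        · rw [hv2 δ hδC] at heq
          exact hfreshB _ (by rw [← heq]; exact hhB γ h1)
        · rw [hv3 δ (not_lt.mp h2) hδC] at heq
          exact hδC ⟨not_lt.mp h2, hδ, Or.inl ⟨γ, h1, heq⟩⟩
      · exfalso
        rw [hv1 δ h2] at heq
        by_cases hγC : γ ∈ C
        · rw [hv2 γ hγC] at heq
          exact hfreshB _ (by rw [heq]; exact hhB δ h2)
        · rw [hv3 γ (not_lt.mp h1) hγC] at heq
          exact hγC ⟨not_lt.mp h1, hγ, Or.inl ⟨δ, h2, heq.symm⟩⟩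
      · by_cases hγC : γ ∈ C <;> by_cases hδC : δ ∈ C
        · rw [hv2 γ hγC, hv2 δ hδC] at heq
          have h4 := emb.injective (Subtype.ext heq)
          have h3 : ι ⟨γ, hγC⟩ = ι ⟨δ, hδC⟩ := by omega
          exact congrArg Subtype.val (hι h3)
        · exfalso
          rw [hv2 γ hγC, hv3 δ (not_lt.mp h2) hδC] at heq
          exact hfreshB _ (by rw [heq]; exact hgB δ hδ)
        · exfalso
          rw [hv3 γ (not_lt.mp h1) hγC, hv2 δ hδC] at heq
          exact hfreshB _ (by rw [← heq]; exact hgB γ hγ)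
        · rw [hv3 γ (not_lt.mp h1) hγC, hv3 δ (not_lt.mp h2) hδC] at heq
          exact hgood'.1 hγ hδ heq
    · -- coherence with g (a (n+1))
      show {γ | γ < a (n+1) ∧ e' γ ≠ g (a (n+1)) γ}.Finite
      refine (hD.union hC).subset ?_
      rintro γ ⟨hγ, hne⟩
      by_cases h1 : γ < a n
      · exact Or.inl ⟨h1, by rwa [hv1 γ h1] at hne⟩
      · by_cases hγC : γ ∈ C
        · exact Or.inr hγC
        · exact absurd (hv3 γ (not_lt.mp h1) hγC) hne
    · -- avoid reserved set
      show ∀ γ, γ < a (n+1) → e' γ ∉ insert ((emb 0 : ↥(Bᶜ)) : ℕ) R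
      intro γ hγ
      by_cases h1 : γ < a n
      · rw [hv1 γ h1]
        intro hmem
        rcases Finset.mem_insert.mp hmem with hh | hh
        · exact hfreshB 0 (by rw [← hh]; exact hhB γ h1)
        · exact hR γ h1 hh
      · by_cases hγC : γ ∈ C
        · rw [hv2 γ hγC]
          intro hmem
          rcases Finset.mem_insert.mp hmem with hh | hh
          · exact hfreshne _ _ (Nat.succ_ne_zero _) hh
          · exact hfreshB _ (hRB hh)
        · rw [hv3 γ (not_lt.mp h1) hγC]
          intro hmem
          rcases Finset.mem_insert.mp hmem with hh | hh
          · exact hfreshB 0 (by rw [← hh]; exact hgB γ hγ)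
          · exact hγC ⟨not_lt.mp h1, hγ, Or.inr hh⟩
    · -- card
      show (insert ((emb 0 : ↥(Bᶜ)) : ℕ) R).card = n + 1
      rw [Finset.card_insert_of_notMem (fun hmem => hfreshB 0 (hRB hmem)), hcard]
  have hbase : Set.InjOn (g Ordinal.omega0) {γ | γ < a 0} ∧
      {γ | γ < a 0 ∧ g Ordinal.omega0 γ ≠ g (a 0) γ}.Finite ∧
      (∀ γ, γ < a 0 → g Ordinal.omega0 γ ∉ (∅ : Finset ℕ)) ∧
      (∅ : Finset ℕ).card = 0 := by
    refine ⟨?_, ?_, ?_, rfl⟩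
    · rw [ha0]
      exact (hg Ordinal.omega0 le_rfl hω).1
    · refine Set.finite_empty.subset ?_
      rintro γ ⟨_, hne⟩
      rw [ha0] at hne
      exact absurd rfl hne
    · intro γ _ hmem
      exact absurd hmem (Finset.notMem_empty _)
  obtain ⟨f, hf, hlink⟩ := dep_choice
    (P := fun n (p : (Ordinal.{0} → ℕ) × Finset ℕ) =>
      Set.InjOn p.1 {γ | γ < a n} ∧ {γ | γ < a n ∧ p.1 γ ≠ g (a n) γ}.Finite ∧
        (∀ γ, γ < a n → p.1 γ ∉ p.2) ∧ p.2.card = n)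
    (Q := fun n p q => (∀ γ, γ < a n → q.1 γ = p.1 γ) ∧ p.2 ⊆ q.2)
    ⟨(g Ordinal.omega0, ∅), hbase⟩ hstep
  have hagree : ∀ n m, n ≤ m → ∀ γ, γ < a n → (f m).1 γ = (f n).1 γ := by
    intro n m hnm
    induction m, hnm using Nat.le_induction with
    | base => intro γ _; rfl
    | succ m hnm ih =>
      intro γ hγ
      rw [(hlink m).1 γ (lt_of_lt_of_le hγ (hmono.monotone hnm)), ih γ hγ]
  have hRsub : ∀ n m, n ≤ m → (f n).2 ⊆ (f m).2 := by
    intro n m hnm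
    induction m, hnm using Nat.le_induction with
    | base => exact subset_rfl
    | succ m hnm ih => exact ih.trans (hlink m).2
  set e : Ordinal.{0} → ℕ := fun γ => if hh : ∃ n, γ < a n then (f (Nat.find hh)).1 γ else 0
    with he
  have hev : ∀ n γ, γ < a n → e γ = (f n).1 γ := by
    intro n γ hγ
    have hh : ∃ n, γ < a n := ⟨n, hγ⟩
    rw [he]; simp only [dif_pos hh]
    exact (hagree (Nat.find hh) n (Nat.find_le hγ) γ (Nat.find_spec hh)).symm
  refine ⟨e, ⟨?_, ?_⟩, ?_⟩
  · intro γ hγ δ hδ heq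
    obtain ⟨nγ, hnγ⟩ := hacof γ hγ
    obtain ⟨nδ, hnδ⟩ := hacof δ hδ
    have h1 : γ < a (max nγ nδ) := lt_of_lt_of_le hnγ (hmono.monotone (le_max_left _ _))
    have h2 : δ < a (max nγ nδ) := lt_of_lt_of_le hnδ (hmono.monotone (le_max_right _ _))
    rw [hev _ γ h1, hev _ δ h2] at heq
    exact (hf (max nγ nδ)).1 h1 h2 heq
  · have hSsub : (⋃ n, ((f n).2 : Set ℕ)) ⊆ (e '' {γ | γ < α})ᶜ := by
      intro x hx
      simp only [mem_iUnion] at hx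
      obtain ⟨m, hm⟩ := hx
      intro hmem
      obtain ⟨γ, hγ, hγe⟩ := hmem
      obtain ⟨nγ, hnγ⟩ := hacof γ hγ
      have h1 : γ < a (max nγ m) := lt_of_lt_of_le hnγ (hmono.monotone (le_max_left _ _))
      refine (hf (max nγ m)).2.2.1 γ h1 ?_
      rw [← hev _ γ h1, hγe]
      exact hRsub m _ (le_max_right _ _) hm
    refine Set.Infinite.mono hSsub ?_
    intro hfin
    have hsub2 : (f (hfin.toFinset.card + 1)).2 ⊆ hfin.toFinset := by
      intro x hx
      rw [Set.Finite.mem_toFinset]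
      exact mem_iUnion.mpr ⟨_, hx⟩
    have hcard2 := Finset.card_le_card hsub2
    rw [(hf _).2.2.2] at hcard2
    omega
  · intro β hβω hβα
    obtain ⟨n, hn⟩ := hacof β hβα
    refine (((hf n).2.1).union (hcoh β (a n) hβω hn (halt n))).subset ?_
    rintro γ ⟨hγ, hne⟩
    rw [hev n γ (hγ.trans hn)] at hne
    by_cases hc : (f n).1 γ = g (a n) γ
    · exact Or.inr ⟨hγ, fun hh => hne (hc.trans hh)⟩
    · exact Or.inl ⟨hγ.trans hn, hc⟩

lemma exists_good (α : Ordinal.{0}) (hα : α < (Cardinal.aleph 1).ord)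
    (hωα : Ordinal.omega0 ≤ α)
    (g : Ordinal.{0} → Ordinal.{0} → ℕ)
    (hg : ∀ β, Ordinal.omega0 ≤ β → β < α → Good β (g β))
    (hcoh : ∀ β β', Ordinal.omega0 ≤ β → β < β' → β' < α → Coh β (g β') (g β)) :
    ∃ e, Good α e ∧ ∀ β, Ordinal.omega0 ≤ β → β < α → Coh β e (g β) := by
  rcases eq_or_lt_of_le hωα with heq | hlt
  · obtain ⟨e, he⟩ := base_case
    rw [← heq]
    exact ⟨e, he, fun β h1 h2 => absurd h1 h2.not_ge⟩
  · rcases Ordinal.zero_or_succ_or_isSuccLimit α with rfl | ⟨β, rfl⟩ | hlim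
    · exact absurd hlt (Ordinal.bot_eq_zero ▸ bot_le (a := Ordinal.omega0)).not_gt
    · have hβω : Ordinal.omega0 ≤ β := Order.lt_succ_iff.mp hlt
      exact succ_case β hβω g (hg β hβω (Order.lt_succ β))
        (fun β' h1 h2 => hcoh β' β h1 h2 (Order.lt_succ β))
    · have hcnt : (Set.Iio α).Countable := by
        rw [Cardinal.countable_iff_lt_aleph_one, Ordinal.mk_Iio_ordinal, ← not_le,
          Cardinal.aleph_one_le_lift, not_le]
        exact Cardinal.lt_ord.mp hα
      exact limit_case α hlim hlt hcnt g hg hcoh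

noncomputable def F (α : Ordinal.{0}) : Ordinal.{0} → ℕ :=
  Classical.epsilon fun e => Good α e ∧
    ∀ β, Ordinal.omega0 ≤ β → ∀ _h : β < α, Coh β e (F β)
termination_by α
decreasing_by exact _h

lemma F_good : ∀ α : Ordinal.{0}, α < (Cardinal.aleph 1).ord → Ordinal.omega0 ≤ α →
    Good α (F α) ∧ ∀ β, Ordinal.omega0 ≤ β → β < α → Coh β (F α) (F β) := by
  intro α
  induction α using Ordinal.induction with
  | h α IH =>
    intro hα hωα
    have hex : ∃ e, Good α e ∧
        ∀ β, Ordinal.omega0 ≤ β → ∀ _h : β < α, Coh β e (F β) :=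
      exists_good α hα hωα F (fun β hβ1 hβ2 => (IH β hβ2 (hβ2.trans hα) hβ1).1)
        (fun β β' h1 h2 h3 => (IH β' h3 (h3.trans hα) (h1.trans h2.le)).2 β h1 h2)
    have hspec := Classical.epsilon_spec hex
    have hFα : F α = Classical.epsilon fun e => Good α e ∧
        ∀ β, Ordinal.omega0 ≤ β → ∀ _h : β < α, Coh β e (F β) := by
      rw [F]
    rw [hFα]
    exact ⟨hspec.1, fun β h1 h2 => hspec.2 β h1 h2⟩

end CoherentSeqAux

/-- There exists a coherent sequence of one-to-one functions f_α : α → ℕ for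
ω ≤ α < ω₁; here f_α is represented as a function on all ordinals which is
only required to be injective on {γ | γ < α}, and coherence means f_β and f_α
agree on all but finitely many γ < α. -/
theorem exists_coherent_sequence :
    ∃ f : Ordinal.{0} → Ordinal.{0} → ℕ,
      (∀ α : Ordinal.{0}, Ordinal.omega0 ≤ α → α < (Cardinal.aleph 1).ord →
        Set.InjOn (f α) {γ : Ordinal.{0} | γ < α}) ∧
      (∀ α β : Ordinal.{0}, Ordinal.omega0 ≤ α → α < β → β < (Cardinal.aleph 1).ord →
        {γ : Ordinal.{0} | γ < α ∧ f β γ ≠ f α γ}.Finite) := by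
  refine ⟨CoherentSeqAux.F, ?_, ?_⟩
  · intro α h1 h2
    exact (CoherentSeqAux.F_good α h2 h1).1.1
  · intro α β h1 h2 h3
    exact (CoherentSeqAux.F_good β h3 (h1.trans h2.le)).2 α h1 h2
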